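/- Let Λ_k = diag(λ₁,…,λ_k) with all λᵢ > 0, Φ_k and Ψ_k the matrices of top k canonical vectors, and Q any k×k orthogonal matrix. Then (Φ_kQ, Ψ_kQ, Φ_kΛ_kQ, Ψ_kΛ_kQ) is a fixed point of the rank-k AppGrad iteration: the gradient step Φ̃⁺ = Φ_kΛ_kQ − η₁(Sₓ·Φ_kΛ_kQ − S_{xy}·Ψ_kQ) equals Φ_kΛ_kQ, the Gram matrix (Φ̃⁺)ᵀSₓΦ̃⁺ equals QᵀΛ_k²Q, and the normalized iterate Φ̃⁺ · ((Φ̃⁺)ᵀSₓΦ̃⁺)^{-1/2} equals Φ_kQ; symmetrically for the Ψ side. -/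

import Mathlib

open Matrix

private lemma mul_submatrix_right {a b c d : Type*} [Fintype b] [Fintype c]
    (A : Matrix a b ℝ) (B : Matrix b c ℝ) (g : d → c) :
    A * B.submatrix id g = (A * B).submatrix id g := by
  ext i j
  simp [Matrix.mul_apply]

private lemma submatrix_mul_left {a b c d : Type*} [Fintype b] [Fintype c] [Fintype a]
    (A : Matrix a b ℝ) (B : Matrix b c ℝ) (g : d → a) :
    A.submatrix g id * B = (A * B).submatrix g id := by
  ext i j
  simp [Matrix.mul_apply]

private lemma submatrix_mul_submatrix {a b c d e : Type*} [Fintype b] [Fintype a] [Fintype c]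
    (A : Matrix a b ℝ) (B : Matrix b c ℝ) (f : d → a) (g : e → c) :
    A.submatrix f id * B.submatrix id g = (A * B).submatrix f g := by
  ext i j
  simp [Matrix.mul_apply]

/-- `(Φ_k Q, Ψ_k Q, Φ_k Λ_k Q, Ψ_k Λ_k Q)` is a fixed point of the
rank-`k` AppGrad iteration, for any `k×k` orthogonal matrix `Q`. -/
theorem stmt5 {p1 p2 p k : ℕ} (hk : k ≤ p)
    (Sx : Matrix (Fin p1) (Fin p1) ℝ) (Sy : Matrix (Fin p2) (Fin p2) ℝ)
    (Sxy : Matrix (Fin p1) (Fin p2) ℝ)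
    (hSxpd : Sx.PosDef) (hSypd : Sy.PosDef)
    (Φ : Matrix (Fin p1) (Fin p) ℝ) (Ψ : Matrix (Fin p2) (Fin p) ℝ)
    (l : Fin p → ℝ) (hlpos : ∀ i : Fin k, 0 < l (Fin.castLE hk i))
    (hΦ : Φᵀ * Sx * Φ = 1) (hΨ : Ψᵀ * Sy * Ψ = 1)
    (hdecomp : Sxy = Sx * Φ * Matrix.diagonal l * Ψᵀ * Sy)
    -- top `k` canonical vectors and correlations
    (Φk : Matrix (Fin p1) (Fin k) ℝ) (Ψk : Matrix (Fin p2) (Fin k) ℝ)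
    (Λk : Matrix (Fin k) (Fin k) ℝ)
    (hΦk : Φk = Φ.submatrix id (Fin.castLE hk))
    (hΨk : Ψk = Ψ.submatrix id (Fin.castLE hk))
    (hΛk : Λk = Matrix.diagonal (fun i : Fin k => l (Fin.castLE hk i)))
    -- orthogonal matrix `Q`
    (Q : Matrix (Fin k) (Fin k) ℝ) (hQ : Qᵀ * Q = 1) (hQ' : Q * Qᵀ = 1)
    (η1 η2 : ℝ)
    -- gradient steps
    (Φplus : Matrix (Fin p1) (Fin k) ℝ) (Ψplus : Matrix (Fin p2) (Fin k) ℝ)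
    (hΦplus : Φplus = Φk * Λk * Q - η1 • (Sx * (Φk * Λk * Q) - Sxy * (Ψk * Q)))
    (hΨplus : Ψplus = Ψk * Λk * Q - η2 • (Sy * (Ψk * Λk * Q) - Sxyᵀ * (Φk * Q))) :
    -- the gradient step is a fixed point
    Φplus = Φk * Λk * Q ∧ Ψplus = Ψk * Λk * Q ∧
    -- the Gram matrices
    Φplusᵀ * Sx * Φplus = Qᵀ * (Λk * Λk) * Q ∧
    Ψplusᵀ * Sy * Ψplus = Qᵀ * (Λk * Λk) * Q ∧
    -- the normalization step recovers `Φ_k Q` and `Ψ_k Q`, where the inverse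
    -- square root is the inverse of the (unique) positive definite square root
    (∀ Mx : Matrix (Fin k) (Fin k) ℝ, Mx.PosDef → Mx * Mx = Φplusᵀ * Sx * Φplus →
      Φplus * Mx⁻¹ = Φk * Q) ∧
    (∀ My : Matrix (Fin k) (Fin k) ℝ, My.PosDef → My * My = Ψplusᵀ * Sy * Ψplus →
      Ψplus * My⁻¹ = Ψk * Q) := by
  set g := Fin.castLE hk with hg
  have hginj : Function.Injective g := Fin.castLE_injective hk
  -- Φ * ((diagonal l).submatrix id g) = Φk * Λk  and similarly for Ψ
  have hdiagΦ : Φ * (Matrix.diagonal l).submatrix id g = Φk * Λk := by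
    ext i j
    simp [Matrix.mul_apply, Matrix.diagonal, hΦk, hΛk, Finset.sum_ite_eq]
  have hdiagΨ : Ψ * (Matrix.diagonal l).submatrix id g = Ψk * Λk := by
    ext i j
    simp [Matrix.mul_apply, Matrix.diagonal, hΨk, hΛk, Finset.sum_ite_eq]
  -- Sxy * Ψk = Sx * Φk * Λk
  have hSxyΨk : Sxy * Ψk = Sx * (Φk * Λk) := by
    rw [hdecomp, hΨk, mul_submatrix_right]
    have : Sx * Φ * Matrix.diagonal l * Ψᵀ * Sy * Ψ
        = Sx * Φ * Matrix.diagonal l := by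
      calc Sx * Φ * Matrix.diagonal l * Ψᵀ * Sy * Ψ
          = Sx * Φ * Matrix.diagonal l * (Ψᵀ * Sy * Ψ) := by
            simp only [Matrix.mul_assoc]
        _ = Sx * Φ * Matrix.diagonal l := by rw [hΨ, Matrix.mul_one]
    rw [this, Matrix.mul_assoc, ← mul_submatrix_right, ← mul_submatrix_right, hdiagΦ]
  -- Sxyᵀ * Φk = Sy * Ψk * Λk
  have hSxyTΦk : Sxyᵀ * Φk = Sy * (Ψk * Λk) := by
    have hSxT : Sxᵀ = Sx := by
      rw [← Matrix.conjTranspose_eq_transpose_of_trivial]; exact hSxpd.isHermitian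
    have hSyT : Syᵀ = Sy := by
      rw [← Matrix.conjTranspose_eq_transpose_of_trivial]; exact hSypd.isHermitian
    have hT : Sxyᵀ = Sy * Ψ * Matrix.diagonal l * Φᵀ * Sx := by
      rw [hdecomp]
      simp only [Matrix.transpose_mul, Matrix.transpose_transpose,
        Matrix.diagonal_transpose, hSxT, hSyT, Matrix.mul_assoc]
    rw [hT, hΦk, mul_submatrix_right]
    have : Sy * Ψ * Matrix.diagonal l * Φᵀ * Sx * Φ
        = Sy * Ψ * Matrix.diagonal l := by
      calc Sy * Ψ * Matrix.diagonal l * Φᵀ * Sx * Φ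
          = Sy * Ψ * Matrix.diagonal l * (Φᵀ * Sx * Φ) := by
            simp only [Matrix.mul_assoc]
        _ = Sy * Ψ * Matrix.diagonal l := by rw [hΦ, Matrix.mul_one]
    rw [this, Matrix.mul_assoc, ← mul_submatrix_right, ← mul_submatrix_right, hdiagΨ]
  -- fixed point of gradient steps
  have h1 : Φplus = Φk * Λk * Q := by
    rw [hΦplus]
    have : Sx * (Φk * Λk * Q) - Sxy * (Ψk * Q) = 0 := by
      rw [← Matrix.mul_assoc Sxy, hSxyΨk]
      simp [Matrix.mul_assoc]
    rw [this, smul_zero, sub_zero]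
  have h2 : Ψplus = Ψk * Λk * Q := by
    rw [hΨplus]
    have : Sy * (Ψk * Λk * Q) - Sxyᵀ * (Φk * Q) = 0 := by
      rw [← Matrix.mul_assoc Sxyᵀ, hSxyTΦk]
      simp [Matrix.mul_assoc]
    rw [this, smul_zero, sub_zero]
  -- Φkᵀ Sx Φk = 1, Ψkᵀ Sy Ψk = 1
  have hone : ∀ i j : Fin k, (1 : Matrix (Fin p) (Fin p) ℝ) (g i) (g j)
      = (1 : Matrix (Fin k) (Fin k) ℝ) i j := by
    intro i j
    by_cases h : i = j
    · subst h; simp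
    · rw [Matrix.one_apply_ne h, Matrix.one_apply_ne (fun hc => h (hginj hc))]
  have hΦkgram : Φkᵀ * Sx * Φk = 1 := by
    rw [hΦk]
    have ht : (Φ.submatrix id g)ᵀ = Φᵀ.submatrix g id := rfl
    rw [ht, submatrix_mul_left, submatrix_mul_submatrix, hΦ]
    ext i j
    exact hone i j
  have hΨkgram : Ψkᵀ * Sy * Ψk = 1 := by
    rw [hΨk]
    have ht : (Ψ.submatrix id g)ᵀ = Ψᵀ.submatrix g id := rfl
    rw [ht, submatrix_mul_left, submatrix_mul_submatrix, hΨ]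
    ext i j
    exact hone i j
  have hΛkT : Λkᵀ = Λk := by rw [hΛk, Matrix.diagonal_transpose]
  -- Gram matrices
  have hgramΦ : Φplusᵀ * Sx * Φplus = Qᵀ * (Λk * Λk) * Q := by
    rw [h1, Matrix.transpose_mul, Matrix.transpose_mul, hΛkT]
    calc Qᵀ * (Λk * Φkᵀ) * Sx * (Φk * Λk * Q)
        = Qᵀ * Λk * (Φkᵀ * Sx * Φk) * (Λk * Q) := by simp only [Matrix.mul_assoc]
      _ = Qᵀ * (Λk * Λk) * Q := by rw [hΦkgram, Matrix.mul_one]; simp only [Matrix.mul_assoc]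
  have hgramΨ : Ψplusᵀ * Sy * Ψplus = Qᵀ * (Λk * Λk) * Q := by
    rw [h2, Matrix.transpose_mul, Matrix.transpose_mul, hΛkT]
    calc Qᵀ * (Λk * Ψkᵀ) * Sy * (Ψk * Λk * Q)
        = Qᵀ * Λk * (Ψkᵀ * Sy * Ψk) * (Λk * Q) := by simp only [Matrix.mul_assoc]
      _ = Qᵀ * (Λk * Λk) * Q := by rw [hΨkgram, Matrix.mul_one]; simp only [Matrix.mul_assoc]
  -- Λk is positive definite, hence so is QᵀΛkQ
  have hΛkpos : Λk.PosDef := by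
    rw [hΛk]
    exact Matrix.PosDef.diagonal (fun i => hlpos i)
  have hQconj : Qᵀ * Λk * Q = Qᴴ * Λk * Q := by
    rw [Matrix.conjTranspose_eq_transpose_of_trivial]
  have hBpsd : (Qᵀ * Λk * Q).PosSemidef := by
    rw [hQconj]
    exact hΛkpos.posSemidef.conjTranspose_mul_mul_same Q
  -- inverse of QᵀΛkQ
  have hΛkinv : Λk * Matrix.diagonal (fun i => (l (g i))⁻¹) = 1 := by
    rw [hΛk, Matrix.diagonal_mul_diagonal]
    have hf : (fun i => l (g i) * (l (g i))⁻¹) = fun _ : Fin k => (1 : ℝ) := by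
      funext i; exact mul_inv_cancel₀ (ne_of_gt (hlpos i))
    rw [hf, Matrix.diagonal_one]
  have hΛkinv' : Matrix.diagonal (fun i => (l (g i))⁻¹) * Λk = 1 := by
    rw [hΛk, Matrix.diagonal_mul_diagonal]
    have hf : (fun i => (l (g i))⁻¹ * l (g i)) = fun _ : Fin k => (1 : ℝ) := by
      funext i; exact inv_mul_cancel₀ (ne_of_gt (hlpos i))
    rw [hf, Matrix.diagonal_one]
  have hBinv : (Qᵀ * Λk * Q)⁻¹ = Qᵀ * Matrix.diagonal (fun i => (l (g i))⁻¹) * Q := by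
    apply Matrix.inv_eq_right_inv
    calc Qᵀ * Λk * Q * (Qᵀ * Matrix.diagonal (fun i => (l (g i))⁻¹) * Q)
        = Qᵀ * Λk * (Q * Qᵀ) * Matrix.diagonal (fun i => (l (g i))⁻¹) * Q := by
          simp only [Matrix.mul_assoc]
      _ = Qᵀ * (Λk * Matrix.diagonal (fun i => (l (g i))⁻¹)) * Q := by
          rw [hQ', Matrix.mul_one]; simp only [Matrix.mul_assoc]
      _ = 1 := by rw [hΛkinv, Matrix.mul_one, hQ]
  -- uniqueness of positive square root
  have key : ∀ M : Matrix (Fin k) (Fin k) ℝ, M.PosDef →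
      M * M = Qᵀ * (Λk * Λk) * Q → M = Qᵀ * Λk * Q := by
    intro M hM hMsq
    have hsq : M ^ 2 = (Qᵀ * Λk * Q) ^ 2 := by
      rw [pow_two, pow_two, hMsq]
      calc Qᵀ * (Λk * Λk) * Q = Qᵀ * Λk * (Q * Qᵀ) * Λk * Q := by
            rw [hQ', Matrix.mul_one]; simp only [Matrix.mul_assoc]
        _ = Qᵀ * Λk * Q * (Qᵀ * Λk * Q) := by simp only [Matrix.mul_assoc]
    open scoped MatrixOrder in
    exact (CFC.sq_eq_sq_iff M (Qᵀ * Λk * Q) hM.posSemidef.nonneg hBpsd.nonneg).mp hsq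
  refine ⟨h1, h2, hgramΦ, hgramΨ, ?_, ?_⟩
  · intro Mx hMx hMxsq
    have hMx' : Mx = Qᵀ * Λk * Q := key Mx hMx (by rw [hMxsq, hgramΦ])
    rw [h1, hMx', hBinv]
    calc Φk * Λk * Q * (Qᵀ * Matrix.diagonal (fun i => (l (g i))⁻¹) * Q)
        = Φk * Λk * (Q * Qᵀ) * Matrix.diagonal (fun i => (l (g i))⁻¹) * Q := by
          simp only [Matrix.mul_assoc]
      _ = Φk * (Λk * Matrix.diagonal (fun i => (l (g i))⁻¹)) * Q := by
          rw [hQ', Matrix.mul_one]; simp only [Matrix.mul_assoc]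
      _ = Φk * Q := by rw [hΛkinv, Matrix.mul_one]
  · intro My hMy hMysq
    have hMy' : My = Qᵀ * Λk * Q := key My hMy (by rw [hMysq, hgramΨ])
    rw [h2, hMy', hBinv]
    calc Ψk * Λk * Q * (Qᵀ * Matrix.diagonal (fun i => (l (g i))⁻¹) * Q)
        = Ψk * Λk * (Q * Qᵀ) * Matrix.diagonal (fun i => (l (g i))⁻¹) * Q := by
          simp only [Matrix.mul_assoc]
      _ = Ψk * (Λk * Matrix.diagonal (fun i => (l (g i))⁻¹)) * Q := by
          rw [hQ', Matrix.mul_one]; simp only [Matrix.mul_assoc]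
      _ = Ψk * Q := by rw [hΛkinv, Matrix.mul_one]
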